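/- Let η be a real number with 0 < η < π/6, set α = π/(π − 2η), and for ζ ∈ (0, π − 6η) define R0(ζ) = (cot(ζ+4η) − cot(ζ) + α·cot(αζ) − α·cot(α(ζ+4η))) · sin(ζ+6η)·sin(ζ+2η)/sin(4η) and S0(ζ) = sin(ζ+6η)·sin(ζ+2η)/(sin(ζ)·sin(ζ+4η)). Then for every ξ ∈ (0, π − 6η) and all real numbers x, y: y + S0(ξ)·(x − 1) − R0(ξ) = S0(ξ)·( x + S0(π − 6η − ξ)·(y − 1) − R0(π − 6η − ξ) ). -/

import Mathlib

/-- x ↔ y symmetry of the family of tangent lines producing the 'normal' portion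
at μ=0, λ=5η. -/
theorem stmt10 (η : ℝ) (h1 : 0 < η) (h2 : η < Real.pi/6)
    (α : ℝ) (hα : α = Real.pi / (Real.pi - 2*η))
    (R0 S0 : ℝ → ℝ)
    (hR0 : R0 = fun ζ => (Real.cot (ζ + 4*η) - Real.cot ζ + α * Real.cot (α*ζ)
        - α * Real.cot (α*(ζ + 4*η)))
        * (Real.sin (ζ + 6*η) * Real.sin (ζ + 2*η) / Real.sin (4*η)))
    (hS0 : S0 = fun ζ => Real.sin (ζ + 6*η) * Real.sin (ζ + 2*η)
        / (Real.sin ζ * Real.sin (ζ + 4*η))) :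
    ∀ ξ ∈ Set.Ioo 0 (Real.pi - 6*η), ∀ x y : ℝ,
      y + S0 ξ * (x - 1) - R0 ξ
        = S0 ξ * (x + S0 (Real.pi - 6*η - ξ) * (y - 1) - R0 (Real.pi - 6*η - ξ)) := by
  subst hR0 hS0
  rintro ξ ⟨hξ0, hξ1⟩ x y
  have hπ := Real.pi_pos
  have hη2 : (0:ℝ) < Real.pi - 2*η := by linarith
  have hs0 : 0 < Real.sin ξ := Real.sin_pos_of_pos_of_lt_pi hξ0 (by linarith)
  have hs2 : 0 < Real.sin (ξ + 2*η) :=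
    Real.sin_pos_of_pos_of_lt_pi (by linarith) (by linarith)
  have hs4 : 0 < Real.sin (ξ + 4*η) :=
    Real.sin_pos_of_pos_of_lt_pi (by linarith) (by linarith)
  have hs6 : 0 < Real.sin (ξ + 6*η) :=
    Real.sin_pos_of_pos_of_lt_pi (by linarith) (by linarith)
  have hd : 0 < Real.sin (4*η) :=
    Real.sin_pos_of_pos_of_lt_pi (by linarith) (by linarith)
  have cotπ : ∀ t : ℝ, Real.cot (Real.pi - t) = - Real.cot t := by
    intro t
    simp [Real.cot_eq_cos_div_sin, Real.sin_pi_sub, Real.cos_pi_sub, neg_div]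
  have hαval : α * (Real.pi - 2*η) = Real.pi := by
    rw [hα]; exact div_mul_cancel₀ _ (ne_of_gt hη2)
  have e1 : Real.pi - 6*η - ξ + 6*η = Real.pi - ξ := by ring
  have e2 : Real.pi - 6*η - ξ + 2*η = Real.pi - (ξ + 4*η) := by ring
  have e3 : Real.pi - 6*η - ξ + 4*η = Real.pi - (ξ + 2*η) := by ring
  have e4 : α * (Real.pi - 6*η - ξ) = Real.pi - α*(ξ + 4*η) := by
    have h : α * (Real.pi - 6*η - ξ) = α*(Real.pi - 2*η) - α*(ξ+4*η) := by ring
    rw [h, hαval]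
  have e5 : α * (Real.pi - 6*η - ξ + 4*η) = Real.pi - α*ξ := by
    have h : α * (Real.pi - 6*η - ξ + 4*η) = α*(Real.pi - 2*η) - α*ξ := by ring
    rw [h, hαval]
  have e0s : Real.sin (Real.pi - 6*η - ξ) = Real.sin (ξ + 6*η) := by
    rw [show Real.pi - 6*η - ξ = Real.pi - (ξ + 6*η) by ring, Real.sin_pi_sub]
  have e0c : Real.cot (Real.pi - 6*η - ξ) = - Real.cot (ξ + 6*η) := by
    rw [show Real.pi - 6*η - ξ = Real.pi - (ξ + 6*η) by ring, cotπ]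
  -- sine subtraction facts
  have h4a : Real.sin (4*η)
      = Real.sin (ξ+4*η) * Real.cos ξ - Real.cos (ξ+4*η) * Real.sin ξ := by
    have h := Real.sin_sub (ξ+4*η) ξ
    rw [show (ξ+4*η) - ξ = 4*η by ring] at h
    exact h
  have h4b : Real.sin (4*η)
      = Real.sin (ξ+6*η) * Real.cos (ξ+2*η) - Real.cos (ξ+6*η) * Real.sin (ξ+2*η) := by
    have h := Real.sin_sub (ξ+6*η) (ξ+2*η)
    rw [show (ξ+6*η) - (ξ+2*η) = 4*η by ring] at h
    exact h
  -- cot difference identities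
  have hc0 : Real.cot ξ = Real.cot (ξ+4*η)
      + Real.sin (4*η) / (Real.sin ξ * Real.sin (ξ+4*η)) := by
    rw [Real.cot_eq_cos_div_sin, Real.cot_eq_cos_div_sin, h4a]
    field_simp
    ring
  have hc6 : Real.cot (ξ+6*η) = Real.cot (ξ+2*η)
      - Real.sin (4*η) / (Real.sin (ξ+2*η) * Real.sin (ξ+6*η)) := by
    rw [Real.cot_eq_cos_div_sin, Real.cot_eq_cos_div_sin, h4b]
    field_simp [hs2.ne', hs6.ne']
    ring_nf
    field_simp [show Real.sin ξ ≠ 0 from hs0.ne', show Real.sin (ξ + η*2) ≠ 0 by rw [mul_comm η]; exact hs2.ne', show Real.sin (ξ + η*4) ≠ 0 by rw [mul_comm η]; exact hs4.ne', show Real.sin (ξ + η*6) ≠ 0 by rw [mul_comm η]; exact hs6.ne', show Real.sin (η*4) ≠ 0 by rw [mul_comm η]; exact hd.ne']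
  simp only [e4, e5]
  simp only [e1, e2, e3, e0s, e0c, cotπ, Real.sin_pi_sub]
  rw [hc0, hc6]
  generalize Real.cot (α*ξ) = a
  generalize Real.cot (α*(ξ+4*η)) = b
  generalize Real.cot (ξ+4*η) = p
  generalize Real.cot (ξ+2*η) = q
  field_simp [hs0.ne', hs2.ne', hs4.ne', hs6.ne', hd.ne']
  ring_nf
  field_simp [show Real.sin ξ ≠ 0 from hs0.ne', show Real.sin (ξ + η*2) ≠ 0 by rw [mul_comm η]; exact hs2.ne', show Real.sin (ξ + η*4) ≠ 0 by rw [mul_comm η]; exact hs4.ne', show Real.sin (ξ + η*6) ≠ 0 by rw [mul_comm η]; exact hs6.ne', show Real.sin (η*4) ≠ 0 by rw [mul_comm η]; exact hd.ne']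
  ring
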